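/- With Y₁(τ) = 0, Y₂(τ) = I in the linear system Y' = M(t)Y with M(t) = [[iF_t, -F_t],[F_t, iF_t]], one has Y₁(t) = (i/2)(R(t,τ) - I) and Y₂(t) = (1/2)(R(t,τ) + I), hence -Y₁(t)Y₂(t)^{-1} = -i(R(t,τ) - I)(R(t,τ) + I)^{-1} whenever R(t,τ) + I is invertible. -/

import Mathlib

open Matrix

attribute [local instance] Matrix.normedAddCommGroup Matrix.normedSpace

/-- Uniqueness for an ODE whose vector field is Lipschitz on every compact
time interval. -/
theorem ode_unique_aux {E : Type*} [NormedAddCommGroup E] [NormedSpace ℝ E]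
    (v : ℝ → E → E)
    (hv : ∀ a b : ℝ, a ≤ b → ∃ K : NNReal, ∀ t ∈ Set.Icc a b, LipschitzWith K (v t))
    (f g : ℝ → E)
    (hf : ∀ t, HasDerivAt f (v t (f t)) t)
    (hg : ∀ t, HasDerivAt g (v t (g t)) t)
    (τ : ℝ) (hfg : f τ = g τ) : ∀ t, f t = g t := by
  intro t
  set a : ℝ := min τ t - 1 with ha
  set b : ℝ := max τ t + 1 with hb
  have hab : a ≤ b := by
    have h1 : min τ t ≤ max τ t := le_trans (min_le_left _ _) (le_max_left _ _)
    simp only [ha, hb]; linarith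
  obtain ⟨K, hK⟩ := hv a b hab
  set v' : ℝ → E → E := fun s x => v ((Set.projIcc a b hab s : ℝ)) x with hv'def
  have hv' : ∀ s, LipschitzOnWith K (v' s) Set.univ := fun s =>
    (hK _ (Set.projIcc a b hab s).2).lipschitzOnWith
  have hτ : τ ∈ Set.Ioo a b := by
    constructor
    · have := min_le_left τ t; simp only [ha]; linarith
    · have := le_max_left τ t; simp only [hb]; linarith
  have ht : t ∈ Set.Icc a b := by
    constructor
    · have := min_le_right τ t; simp only [ha]; linarith
    · have := le_max_right τ t; simp only [hb]; linarith
  have key : Set.EqOn f g (Set.Icc a b) := by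
    apply ODE_solution_unique_of_mem_Icc (v := v') (s := fun _ => Set.univ) (fun s _ => hv' s) hτ
    · exact fun s _ => (hf s).continuousAt.continuousWithinAt
    · intro s hs
      have : v' s (f s) = v s (f s) := by
        simp [hv'def, Set.projIcc_of_mem hab (Set.mem_Icc_of_Ioo hs)]
      rw [this]; exact hf s
    · exact fun _ _ => Set.mem_univ _
    · exact fun s _ => (hg s).continuousAt.continuousWithinAt
    · intro s hs
      have : v' s (g s) = v s (g s) := by
        simp [hv'def, Set.projIcc_of_mem hab (Set.mem_Icc_of_Ioo hs)]
      rw [this]; exact hg s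
    · exact fun _ _ => Set.mem_univ _
    · exact hfg
  exact key ht

/-- entrywise sup norm of a product. -/
theorem matrix_norm_mul_le {m : Type*} [Fintype m] [DecidableEq m]
    (A B : Matrix m m ℂ) :
    ‖A * B‖ ≤ (Fintype.card m : ℝ) * ‖A‖ * ‖B‖ := by
  have hnn : (0 : ℝ) ≤ (Fintype.card m : ℝ) * ‖A‖ * ‖B‖ := by positivity
  rw [Matrix.norm_le_iff hnn]
  intro i j
  calc ‖(A * B) i j‖ = ‖∑ k, A i k * B k j‖ := by rw [Matrix.mul_apply]
    _ ≤ ∑ k, ‖A i k * B k j‖ := norm_sum_le _ _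
    _ ≤ ∑ _k : m, ‖A‖ * ‖B‖ := by
        apply Finset.sum_le_sum
        intro k _
        rw [norm_mul]
        exact mul_le_mul (Matrix.norm_entry_le_entrywise_sup_norm A)
          (Matrix.norm_entry_le_entrywise_sup_norm B) (norm_nonneg _) (norm_nonneg _)
    _ = (Fintype.card m : ℝ) * ‖A‖ * ‖B‖ := by
        rw [Finset.sum_const, Finset.card_univ, nsmul_eq_mul, mul_assoc]

/-- With initial data `Y₁(τ) = 0`, `Y₂(τ) = I` in the system `Y' = M(t)Y`,
`M(t) = [[iF_t, -F_t],[F_t, iF_t]]`, one has `Y₁(t) = (i/2)(R(t,τ) - I)`,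
`Y₂(t) = (1/2)(R(t,τ) + I)`, hence `-Y₁(t)Y₂(t)⁻¹ = -i(R(t,τ) - I)(R(t,τ) + I)⁻¹`
whenever `R(t,τ) + I` is invertible. -/
theorem block_system_cayley (n : ℕ)
    (F : ℝ → Matrix (Fin n ⊕ Fin n) (Fin n ⊕ Fin n) ℂ) (hFcont : Continuous F)
    (Y₁ Y₂ : ℝ → Matrix (Fin n ⊕ Fin n) (Fin n ⊕ Fin n) ℂ)
    (hY₁ : ∀ t, HasDerivAt Y₁ (Complex.I • (F t * Y₁ t) - F t * Y₂ t) t)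
    (hY₂ : ∀ t, HasDerivAt Y₂ (F t * Y₁ t + Complex.I • (F t * Y₂ t)) t)
    (R : ℝ → ℝ → Matrix (Fin n ⊕ Fin n) (Fin n ⊕ Fin n) ℂ)
    (hR : ∀ τ t : ℝ, HasDerivAt (fun s => R s τ) ((2 * Complex.I) • (F t * R t τ)) t)
    (hRinit : ∀ τ : ℝ, R τ τ = 1)
    (τ : ℝ) (hY₁init : Y₁ τ = 0) (hY₂init : Y₂ τ = 1) :
    ∀ t, Y₁ t = (Complex.I / 2) • (R t τ - 1) ∧
      Y₂ t = ((1 : ℂ) / 2) • (R t τ + 1) ∧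
      (IsUnit (R t τ + 1).det →
        -(Y₁ t * (Y₂ t)⁻¹) = (-Complex.I) • ((R t τ - 1) * (R t τ + 1)⁻¹)) := by
  -- U = Y₂ + i Y₁ is constant equal to 1
  have hU : ∀ t, Y₂ t + Complex.I • Y₁ t = 1 := by
    have hU' : ∀ t, HasDerivAt (fun t => Y₂ t + Complex.I • Y₁ t) 0 t := by
      intro t
      have h : HasDerivAt (fun t => Y₂ t + Complex.I • Y₁ t) _ t := (hY₂ t).add ((hY₁ t).const_smul Complex.I)
      convert h using 1
      match_scalars <;> (first | ring1 | (ring_nf; simp [Complex.I_sq]; try norm_num) | (ring_nf; norm_num [Complex.I_sq]) | (simp [Complex.I_sq, Complex.I_mul_I]; ring1))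
    intro t
    have hconst : (fun t => Y₂ t + Complex.I • Y₁ t) t
        = (fun t => Y₂ t + Complex.I • Y₁ t) τ :=
      is_const_of_deriv_eq_zero (fun s => (hU' s).differentiableAt)
        (fun s => (hU' s).deriv) t τ
    simpa [hY₁init, hY₂init] using hconst
  -- V = Y₂ - i Y₁ satisfies the same ODE as R(·,τ), hence equals it
  have hV : ∀ t, Y₂ t - Complex.I • Y₁ t = R t τ := by
    refine ode_unique_aux (fun t X => (2 * Complex.I) • (F t * X)) ?_ _ _ ?_ ?_ τ ?_
    · -- compact-interval Lipschitz bound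
      intro a b hab
      obtain ⟨C, hC⟩ := (isCompact_Icc (a := a) (b := b)).exists_bound_of_continuousOn
        hFcont.continuousOn
      refine ⟨(2 * (Fintype.card (Fin n ⊕ Fin n) : ℝ) * C).toNNReal, fun t htmem => ?_⟩
      apply LipschitzWith.of_dist_le_mul
      intro X Y
      have hCt : ‖F t‖ ≤ C := hC t htmem
      have hC0 : (0 : ℝ) ≤ C := le_trans (norm_nonneg _) hCt
      rw [dist_eq_norm, dist_eq_norm]
      have heq : (2 * Complex.I) • (F t * X) - (2 * Complex.I) • (F t * Y)
          = (2 * Complex.I) • (F t * (X - Y)) := by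
        rw [mul_sub]; module
      rw [heq, norm_smul]
      have h1 : ‖(2 : ℂ) * Complex.I‖ = 2 := by
        simp [norm_mul, Complex.norm_I]
      rw [h1]
      calc 2 * ‖F t * (X - Y)‖
          ≤ 2 * ((Fintype.card (Fin n ⊕ Fin n) : ℝ) * ‖F t‖ * ‖X - Y‖) := by
            have := matrix_norm_mul_le (F t) (X - Y)
            linarith
        _ ≤ 2 * ((Fintype.card (Fin n ⊕ Fin n) : ℝ) * C * ‖X - Y‖) := by gcongr
        _ ≤ (2 * (Fintype.card (Fin n ⊕ Fin n) : ℝ) * C).toNNReal * ‖X - Y‖ := by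
            rw [Real.coe_toNNReal _ (by positivity)]
            exact le_of_eq (by ring)
    · -- derivative of V
      intro t
      have h : HasDerivAt (fun t => Y₂ t - Complex.I • Y₁ t) _ t := (hY₂ t).sub ((hY₁ t).const_smul Complex.I)
      convert h using 1
      show (2 * Complex.I) • (F t * (Y₂ t - Complex.I • Y₁ t)) = _
      rw [mul_sub, mul_smul_comm]
      match_scalars <;> (first | ring1 | (ring_nf; simp [Complex.I_sq]; try norm_num) | (ring_nf; norm_num [Complex.I_sq]) | (simp [Complex.I_sq, Complex.I_mul_I]; ring1))
      all_goals rfl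
    · exact fun t => hR τ t
    · simp [hY₁init, hY₂init, hRinit]
  -- extract the formulas
  intro t
  have h1 := hU t
  have h2 := hV t
  have hY₁eq : Y₁ t = (Complex.I / 2) • (R t τ - 1) := by
    have key : (2 * Complex.I) • Y₁ t = 1 - R t τ := by
      rw [← h1, ← h2]; module
    have h3 := congrArg (fun X => (2 * Complex.I)⁻¹ • X) key
    simp only [smul_smul] at h3
    rw [inv_mul_cancel₀ (by simp [Complex.I_ne_zero] : (2 : ℂ) * Complex.I ≠ 0),
      one_smul] at h3
    rw [h3]
    have hinv : (2 * Complex.I)⁻¹ = -(Complex.I / 2) := by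
      apply inv_eq_of_mul_eq_one_right
      have : (2 : ℂ) * Complex.I * -(Complex.I / 2) = -(Complex.I * Complex.I) := by ring
      rw [this, Complex.I_mul_I]; norm_num
    rw [hinv]
    module
  have hY₂eq : Y₂ t = ((1 : ℂ) / 2) • (R t τ + 1) := by
    have key : (2 : ℂ) • Y₂ t = R t τ + 1 := by
      rw [← h1, ← h2]; module
    have h3 := congrArg (fun X => ((2 : ℂ))⁻¹ • X) key
    simp only [smul_smul] at h3
    rw [inv_mul_cancel₀ (by norm_num : (2 : ℂ) ≠ 0), one_smul] at h3
    rw [h3]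
    module
  refine ⟨hY₁eq, hY₂eq, fun hdet => ?_⟩
  haveI h2inv : Invertible ((1 : ℂ) / 2) := invertibleOfNonzero (by norm_num)
  have hinv2 : (Y₂ t)⁻¹ = (2 : ℂ) • (R t τ + 1)⁻¹ := by
    rw [hY₂eq, Matrix.inv_smul _ _ hdet]
    congr 1
    exact invOf_eq_right_inv (by norm_num)
  rw [hY₁eq, hinv2, smul_mul_assoc, mul_smul_comm, smul_smul]
  match_scalars
  ring
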